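/- ∫_0^1 ( ∫_0^{1−a_2} 1/((a_1 + a_2)·(1 − a_1)) da_1 ) da_2 = π²/6. -/

import Mathlib

open Real MeasureTheory intervalIntegral Set Filter
open scoped Topology

/-- Inner integral evaluation. -/
lemma inner_eval {a : ℝ} (h0 : 0 < a) (h1 : a ≤ 1) :
    ∫ x in (0:ℝ)..(1 - a), 1 / ((x + a) * (1 - x)) = -2 * Real.log a / (1 + a) := by
  have hle : (0:ℝ) ≤ 1 - a := by linarith
  have hpos : (0:ℝ) < 1 + a := by linarith
  have step1 : Set.EqOn (fun x : ℝ => 1 / ((x + a) * (1 - x)))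
      (fun x : ℝ => (1 / (1 + a)) * (1 / (x + a) + 1 / (1 - x))) (Set.uIcc 0 (1 - a)) := by
    intro x hx
    rw [Set.uIcc_of_le hle] at hx
    have hxa : 0 < x + a := by linarith [hx.1]
    have h1x : 0 < 1 - x := by linarith [hx.2]
    field_simp
    ring
  rw [intervalIntegral.integral_congr step1, intervalIntegral.integral_const_mul]
  have int1 : IntervalIntegrable (fun x : ℝ => 1 / (x + a)) volume 0 (1 - a) := by
    apply ContinuousOn.intervalIntegrable
    apply continuousOn_const.div (by fun_prop)
    intro x hx
    rw [Set.uIcc_of_le hle] at hx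
    nlinarith [hx.1]
  have int2 : IntervalIntegrable (fun x : ℝ => 1 / (1 - x)) volume 0 (1 - a) := by
    apply ContinuousOn.intervalIntegrable
    apply continuousOn_const.div (by fun_prop)
    intro x hx
    rw [Set.uIcc_of_le hle] at hx
    nlinarith [hx.2]
  rw [intervalIntegral.integral_add int1 int2]
  have hA : ∫ x in (0:ℝ)..(1 - a), 1 / (x + a) = -Real.log a := by
    have := intervalIntegral.integral_comp_add_right (a := (0:ℝ)) (b := 1 - a)
      (fun y : ℝ => 1 / y) a
    rw [this]
    norm_num
    rw [integral_inv (by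
      intro hmem
      rw [Set.uIcc_of_le h1] at hmem
      exact absurd hmem.1 (not_le.mpr h0))]
    rw [one_div, Real.log_inv]
  have hB : ∫ x in (0:ℝ)..(1 - a), 1 / (1 - x) = -Real.log a := by
    have := intervalIntegral.integral_comp_sub_left (a := (0:ℝ)) (b := 1 - a)
      (fun y : ℝ => 1 / y) 1
    rw [this]
    norm_num
    rw [integral_inv (by
      intro hmem
      rw [Set.uIcc_of_le h1] at hmem
      exact absurd hmem.1 (not_le.mpr h0))]
    rw [one_div, Real.log_inv]
  rw [hA, hB]
  field_simp
  ring

noncomputable def Fp (n : ℕ) (x : ℝ) : ℝ :=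
  x ^ (n + 1) / ((n : ℝ) + 1) ^ 2 - x ^ (n + 1) * Real.log x / ((n : ℝ) + 1)

lemma Fp_deriv (n : ℕ) {x : ℝ} (hx : 0 < x) :
    HasDerivAt (Fp n) (x ^ n * (-Real.log x)) x := by
  have hm : ((n : ℝ) + 1) ≠ 0 := by positivity
  have h1 : HasDerivAt (fun y : ℝ => y ^ (n + 1)) (((n : ℕ) + 1 : ℕ) * x ^ n) x := by
    simpa using hasDerivAt_pow (n + 1) x
  have h2 : HasDerivAt Real.log x⁻¹ x := Real.hasDerivAt_log hx.ne'
  have h3 : HasDerivAt (fun y : ℝ => y ^ (n + 1) * Real.log y)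
      ((((n : ℕ) + 1 : ℕ) * x ^ n) * Real.log x + x ^ (n + 1) * x⁻¹) x := h1.mul h2
  have h4 := ((h1.div_const (((n : ℝ) + 1) ^ 2)).sub (h3.div_const ((n : ℝ) + 1)))
  refine h4.congr_deriv ?_
  have : x ^ (n + 1) * x⁻¹ = x ^ n := by
    rw [pow_succ, mul_assoc, mul_inv_cancel₀ hx.ne', mul_one]
  rw [this]
  push_cast
  field_simp
  ring

lemma interval_pow_log (n : ℕ) {u : ℝ} (hu : 0 < u) (hu1 : u ≤ 1) :
    ∫ x in u..1, x ^ n * (-Real.log x) = Fp n 1 - Fp n u := by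
  apply intervalIntegral.integral_eq_sub_of_hasDerivAt
  · intro x hx
    rw [Set.uIcc_of_le hu1] at hx
    exact Fp_deriv n (lt_of_lt_of_le hu hx.1)
  · apply ContinuousOn.intervalIntegrable
    apply (continuousOn_pow n).mul
    apply ContinuousOn.neg
    apply Real.continuousOn_log.mono
    intro x hx
    rw [Set.uIcc_of_le hu1] at hx
    exact ne_of_gt (lt_of_lt_of_le hu hx.1)

lemma Fp_one (n : ℕ) : Fp n 1 = 1 / ((n : ℝ) + 1) ^ 2 := by
  simp [Fp]

lemma Fp_tendsto (n : ℕ) :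
    Tendsto (fun k : ℕ => Fp n (1 / ((k : ℝ) + 1))) atTop (𝓝 0) := by
  have hu : Tendsto (fun k : ℕ => 1 / ((k : ℝ) + 1)) atTop (𝓝 0) :=
    tendsto_one_div_add_atTop_nhds_zero_nat
  have hu' : Tendsto (fun k : ℕ => 1 / ((k : ℝ) + 1)) atTop (𝓝[>] 0) := by
    apply tendsto_nhdsWithin_of_tendsto_nhds_of_eventually_within _ hu
    exact Eventually.of_forall fun k => Set.mem_Ioi.mpr (by positivity)
  have h1 : Tendsto (fun y : ℝ => y ^ (n + 1) / ((n : ℝ) + 1) ^ 2) (𝓝[>] 0) (𝓝 0) := by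
    have := ((continuous_pow (n + 1)).tendsto (0:ℝ)).div_const (((n : ℝ) + 1) ^ 2)
    simpa using this.mono_left nhdsWithin_le_nhds
  have h2 : Tendsto (fun y : ℝ => y ^ (n + 1) * Real.log y / ((n : ℝ) + 1)) (𝓝[>] 0) (𝓝 0) := by
    have hlog : Tendsto (fun y : ℝ => Real.log y * y ^ ((n : ℝ) + 1)) (𝓝[>] 0) (𝓝 0) :=
      tendsto_log_mul_rpow_nhdsGT_zero (by positivity)
    have heq : ∀ᶠ y in 𝓝[>] (0:ℝ), Real.log y * y ^ ((n : ℝ) + 1)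
        = y ^ (n + 1) * Real.log y := by
      filter_upwards [self_mem_nhdsWithin] with y hy
      rw [show ((n : ℝ) + 1) = ((n + 1 : ℕ) : ℝ) by push_cast; ring,
        Real.rpow_natCast]
      ring
    have := (hlog.congr' heq).div_const ((n : ℝ) + 1)
    simpa using this
  have : Tendsto (fun y : ℝ => Fp n y) (𝓝[>] 0) (𝓝 (0 - 0)) := h1.sub h2
  simpa [Function.comp_def] using this.comp hu'

lemma pow_log_integrableOn (n : ℕ) :
    IntegrableOn (fun x : ℝ => x ^ n * (-Real.log x)) (Set.Ioo 0 1) ∧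
    ∫ x in Set.Ioo (0:ℝ) 1, x ^ n * (-Real.log x) = 1 / ((n : ℝ) + 1) ^ 2 := by
  set g : ℝ → ℝ := fun x => x ^ n * (-Real.log x) with hg
  have hu : Tendsto (fun k : ℕ => 1 / ((k : ℝ) + 1)) atTop (𝓝 0) :=
    tendsto_one_div_add_atTop_nhds_zero_nat
  have hcover : AECover ((volume : Measure ℝ).restrict (Set.Ioo 0 1)) atTop
      (fun k : ℕ => Set.Ioc (1 / ((k : ℝ) + 1)) 1) :=
    aecover_Ioo_of_Ioc hu tendsto_const_nhds
  have hukpos : ∀ k : ℕ, (0:ℝ) < 1 / ((k : ℝ) + 1) := fun k => by positivity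
  have hukle : ∀ k : ℕ, (1 / ((k : ℝ) + 1) : ℝ) ≤ 1 := fun k => by
    rw [div_le_one (by positivity)]; linarith [Nat.cast_nonneg (α := ℝ) k]
  have hmeas : ∀ k : ℕ, ((volume : Measure ℝ).restrict (Set.Ioo 0 1)).restrict
      (Set.Ioc (1 / ((k : ℝ) + 1)) 1)
      = (volume : Measure ℝ).restrict (Set.Ioo (1 / ((k : ℝ) + 1)) 1) := by
    intro k
    rw [Measure.restrict_restrict measurableSet_Ioc]
    congr 1
    ext x
    constructor
    · rintro ⟨⟨h1, h2⟩, ⟨h3, h4⟩⟩; exact ⟨h1, h4⟩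
    · rintro ⟨h1, h2⟩
      exact ⟨⟨h1, h2.le⟩, ⟨lt_trans (hukpos k) h1, h2⟩⟩
  have gnn : ∀ x ∈ Set.Ioo (0:ℝ) 1, 0 ≤ g x := by
    rintro x ⟨hx0, hx1⟩
    have : Real.log x ≤ 0 := Real.log_nonpos hx0.le hx1.le
    have : 0 ≤ -Real.log x := by linarith
    positivity
  have hFnn : ∀ k : ℕ, 0 ≤ Fp n (1 / ((k : ℝ) + 1)) := by
    intro k
    have h1 := hukpos k
    have h2 := hukle k
    have hlog : Real.log (1 / ((k : ℝ) + 1)) ≤ 0 := Real.log_nonpos h1.le h2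
    have hp : (0:ℝ) ≤ (1 / ((k : ℝ) + 1)) ^ (n + 1) := by positivity
    have : (0:ℝ) ≤ -((1 / ((k : ℝ) + 1)) ^ (n + 1) * Real.log (1 / ((k : ℝ) + 1))) := by
      nlinarith
    unfold Fp
    have hd : (0:ℝ) < ((n:ℝ) + 1) := by positivity
    rw [sub_nonneg, div_le_div_iff₀ (by positivity) (by positivity)]
    nlinarith
  have hset : ∀ k : ℕ, ∫ x in Set.Ioc (1 / ((k : ℝ) + 1)) 1, g x
      ∂((volume : Measure ℝ).restrict (Set.Ioo 0 1))
      = Fp n 1 - Fp n (1 / ((k : ℝ) + 1)) := by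
    intro k
    rw [show ∫ x in Set.Ioc (1 / ((k : ℝ) + 1)) 1, g x
        ∂((volume : Measure ℝ).restrict (Set.Ioo 0 1))
        = ∫ x in Set.Ioo (1 / ((k : ℝ) + 1)) 1, g x from by rw [hmeas k],
      ← MeasureTheory.integral_Ioc_eq_integral_Ioo,
      ← intervalIntegral.integral_of_le (hukle k)]
    exact interval_pow_log n (hukpos k) (hukle k)
  have hcont : ∀ k : ℕ, IntegrableOn g (Set.Ioc (1 / ((k : ℝ) + 1)) 1)
      ((volume : Measure ℝ).restrict (Set.Ioo 0 1)) := by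
    intro k
    have hcg : ContinuousOn g (Set.Icc (1 / ((k : ℝ) + 1)) 1) := by
      apply (continuousOn_pow n).mul
      apply ContinuousOn.neg
      apply Real.continuousOn_log.mono
      intro x hx
      exact ne_of_gt (lt_of_lt_of_le (hukpos k) hx.1)
    have hint : IntegrableOn g (Set.Ioc (1 / ((k : ℝ) + 1)) 1) volume :=
      hcg.integrableOn_Icc.mono_set Set.Ioc_subset_Icc_self
    exact hint.mono_measure Measure.restrict_le_self
  have hnorm : ∀ k : ℕ, ∫ x in Set.Ioc (1 / ((k : ℝ) + 1)) 1, ‖g x‖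
      ∂((volume : Measure ℝ).restrict (Set.Ioo 0 1)) ≤ 1 / ((n : ℝ) + 1) ^ 2 := by
    intro k
    have heq : ∫ x in Set.Ioc (1 / ((k : ℝ) + 1)) 1, ‖g x‖
        ∂((volume : Measure ℝ).restrict (Set.Ioo 0 1))
        = ∫ x in Set.Ioc (1 / ((k : ℝ) + 1)) 1, g x
        ∂((volume : Measure ℝ).restrict (Set.Ioo 0 1)) := by
      rw [show ∫ x in Set.Ioc (1 / ((k : ℝ) + 1)) 1, ‖g x‖
          ∂((volume : Measure ℝ).restrict (Set.Ioo 0 1))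
          = ∫ x in Set.Ioo (1 / ((k : ℝ) + 1)) 1, ‖g x‖ from by rw [hmeas k],
        show ∫ x in Set.Ioc (1 / ((k : ℝ) + 1)) 1, g x
          ∂((volume : Measure ℝ).restrict (Set.Ioo 0 1))
          = ∫ x in Set.Ioo (1 / ((k : ℝ) + 1)) 1, g x from by rw [hmeas k]]
      apply setIntegral_congr_fun measurableSet_Ioo
      intro x hx
      exact Real.norm_of_nonneg (gnn x ⟨lt_trans (hukpos k) hx.1, hx.2⟩)
    rw [heq, hset k, Fp_one n]
    linarith [hFnn k]
  have hintg : Integrable g ((volume : Measure ℝ).restrict (Set.Ioo 0 1)) :=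
    hcover.integrable_of_integral_norm_bounded _ hcont (Eventually.of_forall hnorm)
  refine ⟨hintg, ?_⟩
  apply hcover.integral_eq_of_tendsto _ hintg
  have h : Tendsto (fun k : ℕ => Fp n 1 - Fp n (1 / ((k : ℝ) + 1))) atTop
      (𝓝 (Fp n 1 - 0)) := tendsto_const_nhds.sub (Fp_tendsto n)
  have h2 : Fp n 1 - 0 = 1 / ((n : ℝ) + 1) ^ 2 := by rw [Fp_one, sub_zero]
  rw [h2] at h
  exact Tendsto.congr (fun k => (hset k).symm) h

lemma hasSum_shift : HasSum (fun n : ℕ => 1 / ((n : ℝ) + 1) ^ 2) (π ^ 2 / 6) := by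
  have h0 : HasSum (fun n : ℕ => 1 / (n : ℝ) ^ 2) (π ^ 2 / 6) := hasSum_zeta_two
  have h1 : HasSum (fun n : ℕ => 1 / (((n + 1 : ℕ)) : ℝ) ^ 2) (π ^ 2 / 6) := by
    rw [hasSum_nat_add_iff (f := fun n : ℕ => 1 / (n : ℝ) ^ 2) 1]
    simpa using h0
  have hfun : (fun n : ℕ => 1 / (((n + 1 : ℕ)) : ℝ) ^ 2)
      = fun n : ℕ => 1 / ((n : ℝ) + 1) ^ 2 := by
    funext n; push_cast; ring
  exact hfun ▸ h1

lemma alt_sum : ∑' n : ℕ, ((-1 : ℝ)) ^ n * 2 * (1 / ((n : ℝ) + 1) ^ 2) = π ^ 2 / 6 := by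
  set S : ℝ := π ^ 2 / 6 with hS
  set g : ℕ → ℝ := fun n => 1 / ((n : ℝ) + 1) ^ 2 with hgdef
  have hg : HasSum g S := hasSum_shift
  have hodd : HasSum (fun k : ℕ => g (2 * k + 1)) (1 / 4 * S) := by
    have hfun : (fun k : ℕ => (1 / 4 : ℝ) * g k) = fun k : ℕ => g (2 * k + 1) := by
      funext k
      simp only [hgdef]
      push_cast
      rw [div_mul_div_comm, one_mul, eq_comm, div_eq_div_iff (by positivity) (by positivity)]
      ring
    exact hfun ▸ hg.mul_left (1 / 4)
  have hsum_even : Summable fun k : ℕ => g (2 * k) :=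
    hg.summable.comp_injective fun a b h => by omega
  obtain ⟨E, hE⟩ := hsum_even
  have hES : E + 1 / 4 * S = S := (hE.even_add_odd hodd).unique hg
  set h : ℕ → ℝ := fun n => (-1 : ℝ) ^ n * 2 * g n with hhdef
  have ha_even : HasSum (fun k : ℕ => h (2 * k)) (2 * E) := by
    have hfun : (fun k : ℕ => 2 * g (2 * k)) = fun k : ℕ => h (2 * k) := by
      funext k
      simp only [hhdef, pow_mul, neg_one_sq, one_pow, one_mul]
    exact hfun ▸ hE.mul_left 2
  have ha_odd : HasSum (fun k : ℕ => h (2 * k + 1)) (-(2 * (1 / 4 * S))) := by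
    have hfun : (fun k : ℕ => -(2 * g (2 * k + 1))) = fun k : ℕ => h (2 * k + 1) := by
      funext k
      simp only [hhdef, pow_succ, pow_mul, neg_one_sq, one_pow, one_mul]
      ring
    exact hfun ▸ (hodd.mul_left 2).neg
  have htotal : HasSum h (2 * E + -(2 * (1 / 4 * S))) := ha_even.even_add_odd ha_odd
  have hval : 2 * E + -(2 * (1 / 4 * S)) = S := by linarith
  rw [hval] at htotal
  exact htotal.tsum_eq
lemma outer_eval : ∫ a in (0:ℝ)..1, -2 * Real.log a / (1 + a) = π ^ 2 / 6 := by
  rw [intervalIntegral.integral_of_le (by norm_num : (0:ℝ) ≤ 1),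
    MeasureTheory.integral_Ioc_eq_integral_Ioo]
  set μ : Measure ℝ := (volume : Measure ℝ).restrict (Set.Ioo 0 1) with hμ
  set F : ℕ → ℝ → ℝ := fun n x => (-2 * Real.log x) * (-x) ^ n with hF
  have hFeq : ∀ n : ℕ, F n = fun x : ℝ => ((-1 : ℝ) ^ n * 2) * (x ^ n * (-Real.log x)) := by
    intro n
    funext x
    show (-2 * Real.log x) * (-x) ^ n = _
    rw [neg_pow]
    ring
  have h1 : ∀ n : ℕ, Integrable (F n) μ := by
    intro n
    rw [hFeq n]
    exact ((pow_log_integrableOn n).1.const_mul _)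
  have hnorm : ∀ n : ℕ, ∫ x, ‖F n x‖ ∂μ = 2 * (1 / ((n : ℝ) + 1) ^ 2) := by
    intro n
    have : ∫ x, ‖F n x‖ ∂μ = ∫ x in Set.Ioo (0:ℝ) 1, 2 * (x ^ n * (-Real.log x)) := by
      apply setIntegral_congr_fun measurableSet_Ioo
      intro x hx
      have hx0 : 0 < x := hx.1
      have hx1 : x < 1 := hx.2
      have hlog : Real.log x < 0 := Real.log_neg hx0 hx1
      simp only [hF, norm_mul, norm_pow, norm_neg, Real.norm_eq_abs]
      rw [abs_of_neg hlog, abs_of_pos hx0, abs_two]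
      ring
    rw [this, MeasureTheory.integral_const_mul, (pow_log_integrableOn n).2]
  have h2 : Summable fun n : ℕ => ∫ x, ‖F n x‖ ∂μ := by
    apply Summable.congr ((hasSum_shift.mul_left 2).summable)
    intro n
    exact (hnorm n).symm
  have h3 := MeasureTheory.integral_tsum_of_summable_integral_norm h1 h2
  have hL : ∀ n : ℕ, ∫ x, F n x ∂μ = (-1 : ℝ) ^ n * 2 * (1 / ((n : ℝ) + 1) ^ 2) := by
    intro n
    rw [show (fun x => F n x) = F n from rfl, hFeq n, MeasureTheory.integral_const_mul,
      (pow_log_integrableOn n).2]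
  have hR : ∫ x, (∑' n : ℕ, F n x) ∂μ = ∫ x in Set.Ioo (0:ℝ) 1, -2 * Real.log x / (1 + x) := by
    apply setIntegral_congr_fun measurableSet_Ioo
    intro x hx
    have hx0 : 0 < x := hx.1
    have hx1 : x < 1 := hx.2
    have hnx : ‖-x‖ < 1 := by rw [norm_neg, Real.norm_eq_abs, abs_of_pos hx0]; exact hx1
    simp only [hF]
    rw [tsum_mul_left, tsum_geometric_of_norm_lt_one hnx, sub_neg_eq_add, div_eq_mul_inv]
  rw [← hR, ← h3]
  rw [show (∑' n : ℕ, ∫ x, F n x ∂μ)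
      = ∑' n : ℕ, (-1 : ℝ) ^ n * 2 * (1 / ((n : ℝ) + 1) ^ 2) from tsum_congr hL]
  exact alt_sum

/-- Evaluation of the simplex integral `q₃`. -/
theorem stmt_11 :
    ∫ a₂ in (0:ℝ)..1, ∫ a₁ in (0:ℝ)..(1 - a₂),
        1 / ((a₁ + a₂) * (1 - a₁)) = Real.pi ^ 2 / 6 := by
  have h : ∀ᵐ a₂ : ℝ, a₂ ∈ Set.uIoc (0:ℝ) 1 →
      (∫ a₁ in (0:ℝ)..(1 - a₂), 1 / ((a₁ + a₂) * (1 - a₁)))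
        = -2 * Real.log a₂ / (1 + a₂) := by
    apply Eventually.of_forall
    intro a ha
    rw [Set.uIoc_of_le (by norm_num : (0:ℝ) ≤ 1)] at ha
    exact inner_eval ha.1 ha.2
  rw [intervalIntegral.integral_congr_ae h]
  exact outer_eval
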